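/- Let N ≥ 1 be an integer and γ > 0, ρ > 0, β > 0, σ > 0, Δ > 0 reals. Let λ₀ > 0 and let R, A : (0, λ₀) → ℝ be functions such that the limits lim_{λ→0⁺} (R(λ) − √(γ/λ)·Δ) and lim_{λ→0⁺} (A(λ) − 1)/√λ both exist and are finite, and such that R(λ) > 0 for all λ ∈ (0, λ₀). Define J(λ) = (1 + 2λN·R(λ)²·A(λ)/γ)·(R(λ)A(λ)/γ)·σ²/(ρ(2β+ρ)(β+ρ+R(λ))) − (1/(ρ(2β+ρ)))·(σR(λ)A(λ)/γ)²·(λN + (γ + 2λN·R(λ)²)/((ρ + 2R(λ))(β+ρ+R(λ)))). Then lim_{λ→0⁺} (J(λ) − σ²/(2ργ(2β+ρ)))/√λ = −σ²(1 + 2Δ²N)/(4γ^{3/2}ρΔ). -/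
import Mathlib

open Filter

noncomputable def Mf (Nr g b h c s r a : ℝ) : ℝ :=
    ((-1:ℝ) * g * h * c)
    + ((-2:ℝ) * g * b * c)
    + ((-2:ℝ) * Nr * h * c^3)
    + ((-4:ℝ) * Nr * b * c^3)
    + ((-1:ℝ) * s * g * h^2)
    + ((-1:ℝ) * s * g * b * h)
    + ((-2:ℝ) * s * Nr * h^2 * c^2)
    + ((-2:ℝ) * s * Nr * b * h * c^2)
    + ((2:ℝ) * s * a * g * h * c)
    + ((-4:ℝ) * s * a * Nr * h * c^3)
    + ((-8:ℝ) * s * a * Nr * b * c^3)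
    + ((-2:ℝ) * s * a^2 * g * c^2)
    + ((-1:ℝ) * s * r * g * h)
    + ((-2:ℝ) * s * r * g * b)
    + ((-6:ℝ) * s * r * Nr * h * c^2)
    + ((-12:ℝ) * s * r * Nr * b * c^2)
    + ((-4:ℝ) * s^2 * a * Nr * h^2 * c^2)
    + ((-4:ℝ) * s^2 * a * Nr * b * h * c^2)
    + ((-2:ℝ) * s^2 * a^2 * Nr * h * c^3)
    + ((-4:ℝ) * s^2 * a^2 * Nr * b * c^3)
    + ((-4:ℝ) * s^2 * r * Nr * h^2 * c)
    + ((-4:ℝ) * s^2 * r * Nr * b * h * c)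
    + ((2:ℝ) * s^2 * r * a * g * h)
    + ((-12:ℝ) * s^2 * r * a * Nr * h * c^2)
    + ((-24:ℝ) * s^2 * r * a * Nr * b * c^2)
    + ((-4:ℝ) * s^2 * r * a^2 * g * c)
    + ((-6:ℝ) * s^2 * r^2 * Nr * h * c)
    + ((-12:ℝ) * s^2 * r^2 * Nr * b * c)
    + ((-2:ℝ) * s^3 * a^2 * Nr * h^2 * c^2)
    + ((-2:ℝ) * s^3 * a^2 * Nr * b * h * c^2)
    + ((-8:ℝ) * s^3 * r * a * Nr * h^2 * c)
    + ((-8:ℝ) * s^3 * r * a * Nr * b * h * c)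
    + ((-6:ℝ) * s^3 * r * a^2 * Nr * h * c^2)
    + ((-12:ℝ) * s^3 * r * a^2 * Nr * b * c^2)
    + ((-2:ℝ) * s^3 * r^2 * Nr * h^2)
    + ((-2:ℝ) * s^3 * r^2 * Nr * b * h)
    + ((-12:ℝ) * s^3 * r^2 * a * Nr * h * c)
    + ((-24:ℝ) * s^3 * r^2 * a * Nr * b * c)
    + ((-2:ℝ) * s^3 * r^2 * a^2 * g)
    + ((-2:ℝ) * s^3 * r^3 * Nr * h)
    + ((-4:ℝ) * s^3 * r^3 * Nr * b)
    + ((-4:ℝ) * s^4 * r * a^2 * Nr * h^2 * c)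
    + ((-4:ℝ) * s^4 * r * a^2 * Nr * b * h * c)
    + ((-4:ℝ) * s^4 * r^2 * a * Nr * h^2)
    + ((-4:ℝ) * s^4 * r^2 * a * Nr * b * h)
    + ((-6:ℝ) * s^4 * r^2 * a^2 * Nr * h * c)
    + ((-12:ℝ) * s^4 * r^2 * a^2 * Nr * b * c)
    + ((-4:ℝ) * s^4 * r^3 * a * Nr * h)
    + ((-8:ℝ) * s^4 * r^3 * a * Nr * b)
    + ((-2:ℝ) * s^5 * r^2 * a^2 * Nr * h^2)
    + ((-2:ℝ) * s^5 * r^2 * a^2 * Nr * b * h)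
    + ((-2:ℝ) * s^5 * r^3 * a^2 * Nr * h)
    + ((-4:ℝ) * s^5 * r^3 * a^2 * Nr * b)

lemma Mf_cont (Nr g b h c : ℝ) :
    Continuous fun p : ℝ × ℝ × ℝ => Mf Nr g b h c p.1 p.2.1 p.2.2 := by
  unfold Mf; fun_prop

set_option maxHeartbeats 4000000 in
lemma key_id (Nn b h sg D u w Rl Al : ℝ)
    (hu : 0 < u) (hw : 0 < w) (hb : 0 < b) (hh : 0 < h) (hRl : 0 < Rl) :
    ((1 + 2 * u^2 * Nn * Rl ^ 2 * Al / w^2) * (Rl * Al / w^2)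
          * sg ^ 2 / (h * (2 * b + h) * (b + h + Rl))
        - (1 / (h * (2 * b + h))) * (sg * Rl * Al / w^2) ^ 2
          * (u^2 * Nn
              + (w^2 + 2 * u^2 * Nn * Rl ^ 2)
                / ((h + 2 * Rl) * (b + h + Rl)))
      - sg ^ 2 / (2 * h * w^2 * (2 * b + h))) / u
      = sg ^ 2 / (h * (2 * b + h)) * Mf Nn (w^2) b h (w*D) u
            (Rl - (w/u) * D) ((Al - 1) / u)
        / (2 * (w^2) ^ 2
            * (u * h + 2 * (w*D + u * (Rl - (w/u) * D)))
            * (u * (b + h) + (w*D + u * (Rl - (w/u) * D)))) := by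
  have hd1 : 0 < b + h + Rl := by positivity
  have hd2 : 0 < h + 2 * Rl := by positivity
  have hd3 : 0 < 2 * b + h := by positivity
  have hx : w*D + u * (Rl - (w/u) * D) = u * Rl := by
    field_simp
    ring
  rw [hx]
  unfold Mf
  field_simp
  ring1

set_option maxHeartbeats 2000000 in
/-- If `R(λ) = √(γ/λ)·Δ + O(1)` and `A(λ) = 1 + O(√λ)` (in the sense that the
corresponding differences converge as `λ → 0⁺`), with `R(λ) > 0` on `(0, λ₀)`, then the
equilibrium value `J(λ)` of an agent tracking the aim portfolio `A(λ)·μ_t/γ` at relative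
speed `R(λ)` satisfies `(J(λ) − σ²/(2ργ(2β+ρ)))/√λ → −σ²(1+2Δ²N)/(4γ^{3/2}ρΔ)`. -/
theorem value_asymptotics_from_coefficient_asymptotics
    (N : ℕ) (hN : 1 ≤ N) (γ ρ β σ Δ : ℝ)
    (hγ : 0 < γ) (hρ : 0 < ρ) (hβ : 0 < β) (hσ : 0 < σ) (hΔ : 0 < Δ)
    (lam0 : ℝ) (hlam0 : 0 < lam0) (R A : ℝ → ℝ)
    (hR : ∃ LR : ℝ, Tendsto (fun lam : ℝ => R lam - Real.sqrt (γ / lam) * Δ)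
      (nhdsWithin (0 : ℝ) (Set.Ioi 0)) (nhds LR))
    (hA : ∃ LA : ℝ, Tendsto (fun lam : ℝ => (A lam - 1) / Real.sqrt lam)
      (nhdsWithin (0 : ℝ) (Set.Ioi 0)) (nhds LA))
    (hRpos : ∀ lam : ℝ, lam ∈ Set.Ioo (0 : ℝ) lam0 → 0 < R lam)
    (J : ℝ → ℝ)
    (hJ : ∀ lam : ℝ, J lam =
      (1 + 2 * lam * (N : ℝ) * (R lam) ^ 2 * A lam / γ) * (R lam * A lam / γ)
          * σ ^ 2 / (ρ * (2 * β + ρ) * (β + ρ + R lam))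
        - (1 / (ρ * (2 * β + ρ))) * (σ * R lam * A lam / γ) ^ 2
          * (lam * (N : ℝ)
              + (γ + 2 * lam * (N : ℝ) * (R lam) ^ 2)
                / ((ρ + 2 * R lam) * (β + ρ + R lam)))) :
    Tendsto (fun lam : ℝ =>
        (J lam - σ ^ 2 / (2 * ρ * γ * (2 * β + ρ))) / Real.sqrt lam)
      (nhdsWithin (0 : ℝ) (Set.Ioi 0))
      (nhds (-(σ ^ 2 * (1 + 2 * Δ ^ 2 * (N : ℝ))
        / (4 * γ ^ ((3 : ℝ) / 2) * ρ * Δ)))) := by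
  obtain ⟨LR, hLR⟩ := hR
  obtain ⟨LA, hLA⟩ := hA
  set w := Real.sqrt γ with hw
  have hwpos : 0 < w := Real.sqrt_pos.mpr hγ
  have hw2 : w ^ 2 = γ := Real.sq_sqrt hγ.le
  set c := w * Δ with hc
  have hcpos : 0 < c := mul_pos hwpos hΔ
  have hs0 : Tendsto Real.sqrt (nhdsWithin (0:ℝ) (Set.Ioi 0)) (nhds 0) := by
    have h := Real.continuous_sqrt.tendsto (0:ℝ)
    simpa using h.mono_left nhdsWithin_le_nhds
  have key : ∀ lam ∈ Set.Ioo (0:ℝ) lam0,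
      (J lam - σ ^ 2 / (2 * ρ * γ * (2 * β + ρ))) / Real.sqrt lam
      = σ ^ 2 / (ρ * (2 * β + ρ)) * Mf (N:ℝ) γ β ρ c (Real.sqrt lam)
            (R lam - Real.sqrt (γ / lam) * Δ) ((A lam - 1) / Real.sqrt lam)
        / (2 * γ ^ 2
            * (Real.sqrt lam * ρ + 2 * (c + Real.sqrt lam * (R lam - Real.sqrt (γ / lam) * Δ)))
            * (Real.sqrt lam * (β + ρ) + (c + Real.sqrt lam * (R lam - Real.sqrt (γ / lam) * Δ)))) := by
    intro lam hlam
    obtain ⟨hl0, hll⟩ := hlam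
    have hRl : 0 < R lam := hRpos lam ⟨hl0, hll⟩
    have hupos : 0 < Real.sqrt lam := Real.sqrt_pos.mpr hl0
    set u := Real.sqrt lam with hu
    have hu2 : u ^ 2 = lam := Real.sq_sqrt hl0.le
    have hsq : Real.sqrt (γ / lam) = w / u := by
      rw [Real.sqrt_div hγ.le, ← hw, hu]
    rw [hJ lam, hsq]
    set Rl := R lam with hRld
    set Al := A lam with hAld
    rw [show lam = u ^ 2 from hu2.symm, show γ = w ^ 2 from hw2.symm, hc]
    exact key_id (N:ℝ) β ρ σ Δ u w Rl Al hupos hwpos hβ hρ hRl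
  have htriple : Tendsto (fun lam : ℝ =>
        ((Real.sqrt lam, (R lam - Real.sqrt (γ / lam) * Δ, (A lam - 1) / Real.sqrt lam)) : ℝ × ℝ × ℝ))
      (nhdsWithin (0:ℝ) (Set.Ioi 0)) (nhds (0, LR, LA)) :=
    hs0.prodMk_nhds (hLR.prodMk_nhds hLA)
  have hMt : Tendsto (fun lam : ℝ => Mf (N:ℝ) γ β ρ c (Real.sqrt lam)
        (R lam - Real.sqrt (γ / lam) * Δ) ((A lam - 1) / Real.sqrt lam))
      (nhdsWithin (0:ℝ) (Set.Ioi 0)) (nhds (Mf (N:ℝ) γ β ρ c 0 LR LA)) := by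
    have h := ((Mf_cont (N:ℝ) γ β ρ c).tendsto (0, LR, LA)).comp htriple
    exact h
  have hdc : Continuous (fun p : ℝ × ℝ × ℝ =>
      2 * γ ^ 2 * (p.1 * ρ + 2 * (c + p.1 * p.2.1)) * (p.1 * (β + ρ) + (c + p.1 * p.2.1))) := by
    fun_prop
  have hden : Tendsto (fun lam : ℝ =>
        2 * γ ^ 2
          * (Real.sqrt lam * ρ + 2 * (c + Real.sqrt lam * (R lam - Real.sqrt (γ / lam) * Δ)))
          * (Real.sqrt lam * (β + ρ) + (c + Real.sqrt lam * (R lam - Real.sqrt (γ / lam) * Δ))))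
      (nhdsWithin (0:ℝ) (Set.Ioi 0))
      (nhds (2 * γ ^ 2 * ((0:ℝ) * ρ + 2 * (c + 0 * LR)) * ((0:ℝ) * (β + ρ) + (c + 0 * LR)))) := by
    have h := (hdc.tendsto (0, LR, LA)).comp htriple
    exact h
  have hdenne : 2 * γ ^ 2 * ((0:ℝ) * ρ + 2 * (c + 0 * LR)) * ((0:ℝ) * (β + ρ) + (c + 0 * LR)) ≠ 0 := by
    have h1 : 2 * γ ^ 2 * ((0:ℝ) * ρ + 2 * (c + 0 * LR)) * ((0:ℝ) * (β + ρ) + (c + 0 * LR))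
        = 4 * γ ^ 2 * c ^ 2 := by ring
    rw [h1]; positivity
  have hPhi := ((tendsto_const_nhds (x := σ ^ 2 / (ρ * (2 * β + ρ)))).mul hMt).div hden hdenne
  have hev : (fun lam : ℝ => (J lam - σ ^ 2 / (2 * ρ * γ * (2 * β + ρ))) / Real.sqrt lam)
      =ᶠ[nhdsWithin (0:ℝ) (Set.Ioi 0)]
      (fun lam : ℝ => σ ^ 2 / (ρ * (2 * β + ρ)) * Mf (N:ℝ) γ β ρ c (Real.sqrt lam)
            (R lam - Real.sqrt (γ / lam) * Δ) ((A lam - 1) / Real.sqrt lam)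
        / (2 * γ ^ 2
            * (Real.sqrt lam * ρ + 2 * (c + Real.sqrt lam * (R lam - Real.sqrt (γ / lam) * Δ)))
            * (Real.sqrt lam * (β + ρ) + (c + Real.sqrt lam * (R lam - Real.sqrt (γ / lam) * Δ))))) := by
    filter_upwards [Ioo_mem_nhdsGT_of_mem (Set.left_mem_Ico.mpr hlam0)] with lam hlam
    exact key lam hlam
  have hfinal := hPhi.congr' hev.symm
  have hval : -(σ ^ 2 * (1 + 2 * Δ ^ 2 * (N : ℝ)) / (4 * γ ^ ((3 : ℝ) / 2) * ρ * Δ))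
      = σ ^ 2 / (ρ * (2 * β + ρ)) * Mf (N:ℝ) γ β ρ c 0 LR LA
        / (2 * γ ^ 2 * ((0:ℝ) * ρ + 2 * (c + 0 * LR)) * ((0:ℝ) * (β + ρ) + (c + 0 * LR))) := by
    have h32 : γ ^ ((3 : ℝ) / 2) = γ * w := by
      rw [show ((3:ℝ)/2) = (1:ℝ) + 1/2 by norm_num, Real.rpow_add hγ, Real.rpow_one, hw,
        Real.sqrt_eq_rpow]
    unfold Mf
    rw [h32, hc, show γ = w ^ 2 from hw2.symm]
    have hd3 : 0 < 2 * β + ρ := by positivity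
    field_simp
    ring
  rw [hval]
  exact hfinal
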